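/- Let p be a prime and L a 3-dimensional unsolvable Z_p-Lie lattice with a basis (x0,x1,x2) satisfying [x_i,x_{i+1}] = a_{i+2}x_{i+2} (indices mod 3) with v_p(a0) ≤ v_p(a1) ≤ v_p(a2). Then the abelianization L/[L,L] is isomorphic as an abelian group to Z/p^{s0}Z ⊕ Z/p^{s1}Z ⊕ Z/p^{s2}Z, where s_i = v_p(a_i). -/

import Mathlib

set_option maxHeartbeats 1000000
set_option synthInstance.maxHeartbeats 1000000

open Submodule

/-- Quotient of `ℤ_[p]` by the ideal generated by an element of valuation `s`
is `ZMod (p^s)`. -/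
lemma padic_quot_span_equiv (p : ℕ) [Fact p.Prime] (a : ℤ_[p]) (ha : a ≠ 0) (s : ℕ)
    (hs : (s : ℤ) = a.valuation) :
    Nonempty ((ℤ_[p] ⧸ (Ideal.span {a} : Ideal ℤ_[p])) ≃+ ZMod (p ^ s)) := by
  have hsurj : Function.Surjective (PadicInt.toZModPow (p := p) s) := by
    intro y
    refine ⟨((y.val : ℕ) : ℤ_[p]), ?_⟩
    haveI : NeZero (p ^ s) := ⟨pow_ne_zero s (Fact.out (p := p.Prime)).ne_zero⟩
    rw [map_natCast, ZMod.natCast_rightInverse y]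
  have hker : RingHom.ker (PadicInt.toZModPow (p := p) s) = Ideal.span {a} := by
    rw [PadicInt.ker_toZModPow, Ideal.span_singleton_eq_span_singleton]
    refine ⟨PadicInt.unitCoeff ha, ?_⟩
    have := (PadicInt.unitCoeff_spec ha).symm
    have hnat : a.valuation = s := by
      exact_mod_cast hs.symm
    rw [hnat] at this
    rw [mul_comm]; exact this
  exact ⟨((Ideal.quotEquivOfEq hker.symm).trans
    (RingHom.quotientKerEquivOfSurjective hsurj)).toAddEquiv⟩

/-- for a 3-dimensional unsolvable `ℤ_[p]`-Lie lattice with a well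
diagonalizing basis (structure constants `a i` with ordered valuations `s i`),
the abelianization is `ℤ/p^{s0}ℤ ⊕ ℤ/p^{s1}ℤ ⊕ ℤ/p^{s2}ℤ`. -/
theorem stmt7 (p : ℕ) [Fact p.Prime]
    (L : Type*) [LieRing L] [LieAlgebra ℤ_[p] L]
    (hus : ¬ LieAlgebra.IsSolvable L)
    (x : Module.Basis (Fin 3) ℤ_[p] L) (a : Fin 3 → ℤ_[p]) (ha : ∀ i, a i ≠ 0)
    (hx : ∀ i : Fin 3, ⁅x i, x (i + 1)⁆ = a (i + 2) • x (i + 2))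
    (s : Fin 3 → ℕ) (hs : ∀ i, (s i : ℤ) = (a i).valuation)
    (hord : (a 0).valuation ≤ (a 1).valuation ∧ (a 1).valuation ≤ (a 2).valuation) :
    Nonempty ((L ⧸ (⁅(⊤ : LieIdeal ℤ_[p] L), (⊤ : LieIdeal ℤ_[p] L)⁆ : LieIdeal ℤ_[p] L)) ≃+
      (ZMod (p ^ (s 0)) × ZMod (p ^ (s 1)) × ZMod (p ^ (s 2)))) := by
  set I : Fin 3 → Submodule ℤ_[p] ℤ_[p] := fun i => Ideal.span {a i} with hI
  set g : Fin 3 → L := fun i => a i • x i with hg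
  set N : Submodule ℤ_[p] L := Submodule.span ℤ_[p] (Set.range g) with hN
  have e3 : ∀ i : Fin 3, i + 2 + 1 = i := by decide
  have e3' : ∀ i : Fin 3, i + 1 + 2 = i := by decide
  have htri : ∀ i j : Fin 3, j = i ∨ j = i + 1 ∨ j = i + 2 := by decide
  have hgmem : ∀ k, g k ∈ N := fun k => Submodule.subset_span ⟨k, rfl⟩
  have key1 : ∀ i : Fin 3, ⁅x i, x (i + 1)⁆ ∈ N := fun i => by
    rw [hx i]; exact hgmem (i + 2)
  have hbasis : ∀ i j : Fin 3, ⁅x i, x j⁆ ∈ N := by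
    intro i j
    rcases htri i j with rfl | rfl | rfl
    · simpa using N.zero_mem
    · exact key1 i
    · have h := key1 (i + 2)
      rw [e3 i] at h
      rw [← lie_skew]
      exact neg_mem h
  have hall : ∀ m n : L, ⁅m, n⁆ ∈ N := by
    have hx1 : ∀ i : Fin 3, ∀ n : L, ⁅x i, n⁆ ∈ N := by
      intro i n
      refine Submodule.span_induction (p := fun n _ => ⁅x i, n⁆ ∈ N)
        ?_ ?_ ?_ ?_ (Module.Basis.mem_span x n)
      · rintro _ ⟨j, rfl⟩; exact hbasis i j
      · simpa using N.zero_mem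
      · intro y z _ _ hy hz; rw [lie_add]; exact N.add_mem hy hz
      · intro c y _ hy; rw [lie_smul]; exact N.smul_mem c hy
    intro m n
    refine Submodule.span_induction (p := fun m _ => ⁅m, n⁆ ∈ N)
      ?_ ?_ ?_ ?_ (Module.Basis.mem_span x m)
    · rintro _ ⟨i, rfl⟩; exact hx1 i n
    · simpa using N.zero_mem
    · intro y z _ _ hy hz; rw [add_lie]; exact N.add_mem hy hz
    · intro c y _ hy; rw [smul_lie]; exact N.smul_mem c hy
  have hNeq : (⁅(⊤ : LieIdeal ℤ_[p] L), (⊤ : LieIdeal ℤ_[p] L)⁆ :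
      LieIdeal ℤ_[p] L).toSubmodule = N := by
    apply le_antisymm
    · rw [LieSubmodule.lieIdeal_oper_eq_linear_span', Submodule.span_le]
      rintro m ⟨u, -, v, -, rfl⟩
      exact hall u v
    · rw [hN, Submodule.span_le]
      rintro m ⟨i, rfl⟩
      have h : ⁅x (i + 1), x (i + 1 + 1)⁆ ∈
          ⁅(⊤ : LieIdeal ℤ_[p] L), (⊤ : LieIdeal ℤ_[p] L)⁆ :=
        LieSubmodule.lie_mem_lie (LieSubmodule.mem_top _) (LieSubmodule.mem_top _)
      rw [hx (i + 1), e3' i] at h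
      exact h
  -- image of N under the basis equivalence is the product of ideals
  have hsingle : ∀ i : Fin 3, x.equivFun (g i) = Pi.single i (a i) := by
    intro i
    funext j
    rw [hg]
    simp only [map_smul, Pi.smul_apply, Module.Basis.equivFun_self]
    by_cases h : i = j
    · subst h; simp
    · simp [h, Pi.single_apply, Ne.symm h]
  set u : Fin 3 → (Fin 3 → ℤ_[p]) := fun j => Pi.single j (a j) with hu
  have hmap : N.map (x.equivFun : L →ₗ[ℤ_[p]] (Fin 3 → ℤ_[p])) = Submodule.pi Set.univ I := by
    rw [hN, Submodule.map_span]
    have hcomp : (⇑(x.equivFun : L →ₗ[ℤ_[p]] (Fin 3 → ℤ_[p])) ∘ g) =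
        u := funext hsingle
    have himg : (x.equivFun : L →ₗ[ℤ_[p]] (Fin 3 → ℤ_[p])) '' Set.range g =
        Set.range u := by
      rw [← Set.range_comp, hcomp]
    rw [himg]
    apply le_antisymm
    · rw [Submodule.span_le]
      rintro _ ⟨i, rfl⟩
      intro j _
      show u i j ∈ I j
      simp only [hu, Pi.single_apply]
      split
      · next h => subst h; exact Ideal.mem_span_singleton_self _
      · exact (I j).zero_mem
    · intro f hf
      have hdvd : ∀ j, ∃ c, f j = a j * c := fun j =>
        Ideal.mem_span_singleton.mp (hf j (Set.mem_univ j))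
      choose c hc using hdvd
      have hf' : f = ∑ j : Fin 3, c j • u j := by
        funext k
        rw [Finset.sum_apply]
        have hterm : ∀ j, (c j • u j) k = if k = j then c j * a j else 0 := by
          intro j
          rw [hu]
          simp only [Pi.smul_apply, Pi.single_apply, smul_eq_mul]
          split <;> simp
        simp_rw [hterm]
        simp [hc k, mul_comm]
      rw [hf']
      exact Submodule.sum_mem _ fun j _ =>
        Submodule.smul_mem _ _ (Submodule.subset_span ⟨j, rfl⟩)
  -- assemble the equivalences
  obtain ⟨zeta⟩ : Nonempty (∀ i : Fin 3,
      (ℤ_[p] ⧸ (Ideal.span {a i} : Ideal ℤ_[p])) ≃+ ZMod (p ^ s i)) := by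
    have h := fun i => padic_quot_span_equiv p (a i) (ha i) (s i) (hs i)
    exact ⟨fun i => (h i).some⟩
  let E1 : (L ⧸ (⁅(⊤ : LieIdeal ℤ_[p] L), (⊤ : LieIdeal ℤ_[p] L)⁆ :
        LieIdeal ℤ_[p] L).toSubmodule) ≃ₗ[ℤ_[p]]
      ((Fin 3 → ℤ_[p]) ⧸ Submodule.pi Set.univ I) :=
    Submodule.Quotient.equiv _ _ x.equivFun (by
      rw [hNeq, ← hmap])
  let E2 : ((Fin 3 → ℤ_[p]) ⧸ Submodule.pi Set.univ I) ≃ₗ[ℤ_[p]]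
      (∀ i : Fin 3, ℤ_[p] ⧸ I i) :=
    Submodule.quotientPi (R := ℤ_[p]) (Ms := fun _ : Fin 3 => ℤ_[p]) I
  let E3 : (∀ i : Fin 3, ℤ_[p] ⧸ I i) ≃+ ∀ i : Fin 3, ZMod (p ^ s i) :=
    AddEquiv.piCongrRight fun i => zeta i
  let E4 : (∀ i : Fin 3, ZMod (p ^ s i)) ≃+
      ZMod (p ^ s 0) × ZMod (p ^ s 1) × ZMod (p ^ s 2) :=
  { toFun := fun f => (f 0, f 1, f 2)
    invFun := fun t i => match i with
      | ⟨0, _⟩ => t.1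
      | ⟨1, _⟩ => t.2.1
      | ⟨2, _⟩ => t.2.2
    left_inv := fun f => by
      funext i
      fin_cases i <;> rfl
    right_inv := fun t => rfl
    map_add' := fun f h => rfl }
  exact ⟨E1.toAddEquiv.trans (E2.toAddEquiv.trans (E3.trans E4))⟩
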